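/- For the maximal ideal poset P = 2^[n] \ {∅} with d = ⌈n/2⌉ + 1, the quantity β_2 = C(n,2) - n·(d-1) is negative for n ≥ 1. Consequently qdepth of the maximal ideal (x_1,…,x_n) equals ⌈n/2⌉. -/

import Mathlib

open Finset


/-- The sequence `β_k` of the quasi-depth computation: `β_0 = α_0` and
`β_k = α_k - ∑_{j<k} β_j C(d-j, k-j)`. -/
def qbeta (α : ℕ → ℤ) (d : ℕ) : ℕ → ℤ
  | k => α k - ∑ j ∈ (Finset.range k).attach,
      qbeta α d j.1 * (((d - j.1).choose (k - j.1) : ℕ) : ℤ)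
  termination_by k => k
  decreasing_by exact Finset.mem_range.mp j.2

lemma lemB : ∀ k d e : ℕ, k ≤ d →
    ∑ j ∈ range (k+1), (e + j - 1).choose j * (d - j).choose (k - j) = (d + e).choose k := by
  intro k
  induction k using Nat.strong_induction_on with
  | _ k ih =>
    match k with
    | 0 => intro d e _; simp
    | (k+1) =>
      intro d e hkd
      induction e with
      | zero =>
        rw [Finset.sum_eq_single 0]
        · simp
        · intro j hj hj0
          rw [Nat.choose_eq_zero_of_lt (by omega)]
          ring
        · simp
      | succ e ihe =>
        have step : ∀ j ∈ range (k+2), (e + 1 + j - 1).choose j * (d - j).choose (k + 1 - j)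
            = (e + j - 1).choose j * (d - j).choose (k + 1 - j)
              + (if j = 0 then 0 else (e + (j-1)).choose (j-1) * ((d-1) - (j-1)).choose (k - (j-1))) := by
          intro j _
          match j with
          | 0 => simp
          | (j+1) =>
            simp only [if_neg (Nat.succ_ne_zero j)]
            have hc : (e + 1 + (j+1) - 1).choose (j+1) = (e + j).choose j + (e + j).choose (j+1) := by
              have h : e + 1 + (j+1) - 1 = (e + j) + 1 := by omega
              rw [h, Nat.choose_succ_succ]
            rw [hc]
            have h2 : e + (j+1) - 1 = e + j := by omega
            have h3 : d - (j+1) = (d-1) - j := by omega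
            have h4 : k + 1 - (j + 1) = k - j := by omega
            rw [h2, h3, h4]
            simp
            ring
        rw [Finset.sum_congr rfl step, Finset.sum_add_distrib, ihe]
        have hre : ∑ j ∈ range (k+2), (if j = 0 then 0 else (e + (j-1)).choose (j-1) * ((d-1) - (j-1)).choose (k - (j-1)))
            = ∑ j ∈ range (k+1), (e + j).choose j * ((d-1) - j).choose (k - j) := by
          rw [Finset.sum_range_succ']
          simp
        rw [hre]
        have := ih k (Nat.lt_succ_self k) (d-1) (e+1) (by omega)
        have he : ∀ j : ℕ, (e + 1 + j - 1) = e + j := by intro j; omega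
        simp only [he] at this
        rw [this]
        have hd : d - 1 + (e + 1) = d + e := by omega
        rw [hd]
        have hde : d + (e+1) = (d + e) + 1 := by omega
        rw [hde, Nat.choose_succ_succ (d+e) k]
        simp only [Nat.succ_eq_add_one]
        omega

lemma qbeta_eq (α : ℕ → ℤ) (d k : ℕ) :
    qbeta α d k = α k - ∑ j ∈ Finset.range k,
      qbeta α d j * (((d - j).choose (k - j) : ℕ) : ℤ) := by
  rw [qbeta]
  congr 1
  exact Finset.sum_attach (Finset.range k) (fun j => qbeta α d j * (((d - j).choose (k - j) : ℕ) : ℤ))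

lemma lemA (k d : ℕ) (hk : k ≠ 0) (hkd : k ≤ d) :
    ∑ j ∈ range (k+1), (-1:ℤ)^j * (d.choose j) * ((d - j).choose (k - j)) = 0 := by
  have : ∀ j ∈ range (k+1), (-1:ℤ)^j * (d.choose j) * ((d - j).choose (k - j))
      = (d.choose k : ℤ) * ((-1)^j * k.choose j) := by
    intro j hj
    have hjk : j ≤ k := by simpa [Nat.lt_succ_iff] using hj
    have := Nat.choose_mul (n := d) hjk
    have hcast : ((d.choose j : ℤ)) * ((d - j).choose (k - j)) = (d.choose k : ℤ) * (k.choose j) := by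
      exact_mod_cast congrArg (Nat.cast (R := ℤ)) this.symm
    calc (-1:ℤ)^j * (d.choose j) * ((d - j).choose (k - j))
        = (-1:ℤ)^j * ((d.choose j : ℤ) * ((d - j).choose (k - j))) := by ring
      _ = (-1:ℤ)^j * ((d.choose k : ℤ) * (k.choose j)) := by rw [hcast]
      _ = (d.choose k : ℤ) * ((-1)^j * k.choose j) := by ring
  rw [Finset.sum_congr rfl this, ← Finset.mul_sum,
    Int.alternating_sum_range_choose_of_ne hk, mul_zero]

def gam (d e k : ℕ) : ℤ := (((e + k - 1).choose k : ℕ) : ℤ) - (-1)^k * (d.choose k)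

lemma closed_form (n d : ℕ) (hdn : d ≤ n) (α : ℕ → ℤ)
    (hα0 : α 0 = 0) (hα : ∀ k, 1 ≤ k → α k = (n.choose k : ℤ)) :
    ∀ k, k ≤ d → qbeta α d k = gam d (n - d) k := by
  intro k
  induction k using Nat.strong_induction_on with
  | _ k ih =>
    intro hkd
    rw [qbeta_eq]
    have hIH : ∀ j ∈ range k, qbeta α d j * (((d - j).choose (k - j) : ℕ) : ℤ)
        = gam d (n - d) j * (((d - j).choose (k - j) : ℕ) : ℤ) := by
      intro j hj
      rw [ih j (mem_range.mp hj) (le_trans (le_of_lt (mem_range.mp hj)) hkd)]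
    rw [Finset.sum_congr rfl hIH]
    match k with
    | 0 => simp [gam, hα0]
    | (k+1) =>
      have hsum : ∑ j ∈ range (k+1+1), gam d (n-d) j * (((d - j).choose (k+1 - j) : ℕ) : ℤ)
          = (n.choose (k+1) : ℤ) := by
        simp only [gam, sub_mul]
        rw [Finset.sum_sub_distrib]
        have h1 : ∑ j ∈ range (k+1+1), (((n - d + j - 1).choose j : ℕ) : ℤ) * (((d - j).choose (k+1 - j) : ℕ) : ℤ)
            = (n.choose (k+1) : ℤ) := by
          have hb := lemB (k+1) d (n-d) hkd
          have hdn' : d + (n - d) = n := by omega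
          rw [hdn'] at hb
          exact_mod_cast hb
        have h2 : ∑ j ∈ range (k+1+1), (-1:ℤ)^j * (d.choose j : ℤ) * (((d - j).choose (k+1 - j) : ℕ) : ℤ) = 0 :=
          lemA (k+1) d (Nat.succ_ne_zero k) hkd
        rw [h1]
        have : ∑ j ∈ range (k+1+1), (-1:ℤ)^j * (d.choose j : ℤ) * (((d - j).choose (k+1 - j) : ℕ) : ℤ)
            = ∑ j ∈ range (k+1+1), (-1:ℤ)^j * (d.choose j : ℤ) * (((d - j).choose (k+1 - j) : ℕ) : ℤ) := rfl
        rw [show (∑ j ∈ range (k+1+1), (-1:ℤ)^j * ((d.choose j : ℕ) : ℤ) * (((d - j).choose (k+1 - j) : ℕ) : ℤ)) = 0 from h2]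
        simp
      rw [Finset.sum_range_succ] at hsum
      have hlast : gam d (n-d) (k+1) * (((d - (k+1)).choose (k+1 - (k+1)) : ℕ) : ℤ) = gam d (n-d) (k+1) := by
        simp
      rw [hlast] at hsum
      rw [hα (k+1) (Nat.succ_le_succ (Nat.zero_le k))]
      linarith [hsum]

lemma two_mul_choose_two (n : ℕ) : 2 * n.choose 2 = n * (n - 1) := by
  induction n with
  | zero => rfl
  | succ n ih =>
    rw [Nat.choose_succ_succ, Nat.choose_one_right, Nat.mul_add, ih]
    cases n with
    | zero => rfl
    | succ m => simp only [Nat.succ_sub_one]; ring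

lemma key_ineq (n : ℕ) (hn : 1 ≤ n) :
    (n.choose 2 : ℤ) - (n : ℤ) * (((n + 1) / 2 : ℕ) : ℤ) < 0 := by
  have h2 : (2 : ℤ) * (n.choose 2 : ℤ) = (n : ℤ) * ((n : ℤ) - 1) := by
    have := two_mul_choose_two n
    have h1 : ((n - 1 : ℕ) : ℤ) = (n : ℤ) - 1 := by
      have : 1 ≤ n := hn
      push_cast [this]
      ring
    rw [← h1]
    exact_mod_cast this
  have hq : (n : ℤ) ≤ 2 * (((n + 1) / 2 : ℕ) : ℤ) := by
    have : n ≤ 2 * ((n + 1) / 2) := by omega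
    exact_mod_cast this
  have hn' : (1 : ℤ) ≤ (n : ℤ) := by exact_mod_cast hn
  nlinarith [mul_le_mul_of_nonneg_left hq (show (0:ℤ) ≤ (n:ℤ) by linarith)]

lemma gam_nonneg (n : ℕ) (hn : 1 ≤ n) (k : ℕ) (hk : k ≤ (n+1)/2) :
    0 ≤ gam ((n+1)/2) (n - (n+1)/2) k := by
  unfold gam
  rcases Nat.even_or_odd k with he | ho
  · rw [he.neg_one_pow, one_mul, sub_nonneg]
    match k, he with
    | 0, _ => simp
    | (k+1), he =>
      have hk2 : 2 ≤ k + 1 := by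
        obtain ⟨m, hm⟩ := he
        omega
      have hle : (n+1)/2 ≤ n - (n+1)/2 + (k+1) - 1 := by omega
      exact_mod_cast Nat.choose_le_choose (k+1) hle
  · rw [ho.neg_one_pow]
    have : (0:ℤ) ≤ ((n - (n+1)/2 + k - 1).choose k : ℤ) := by positivity
    have h2 : (0:ℤ) ≤ ((((n+1)/2).choose k : ℕ) : ℤ) := by positivity
    linarith

lemma card_filter_eq (n k : ℕ) :
    ((((Finset.univ.powerset).filter (fun A : Finset (Fin n) => A ≠ ∅)).filter
      (fun A => A.card = k)).card : ℤ) = if k = 0 then 0 else (n.choose k : ℤ) := by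
  rw [Finset.filter_filter]
  by_cases hk : k = 0
  · subst hk
    rw [if_pos rfl]
    rw [Finset.filter_false_of_mem, Finset.card_empty]
    · norm_num
    · intro A _
      simp only [not_and]
      intro hA hc
      exact hA (Finset.card_eq_zero.mp hc)
  · rw [if_neg hk]
    have : (Finset.univ.powerset.filter (fun A : Finset (Fin n) => A ≠ ∅ ∧ A.card = k))
        = Finset.univ.powerset.filter (fun A : Finset (Fin n) => A.card = k) := by
      apply Finset.filter_congr
      intro A _
      constructor
      · exact fun h => h.2
      · intro h
        refine ⟨?_, h⟩
        intro hA
        apply hk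
        rw [← h, hA, Finset.card_empty]
    rw [this, ← Finset.powersetCard_eq_filter, Finset.card_powersetCard, Finset.card_univ,
      Fintype.card_fin]


/-- The quasi-depth of a family `P ⊆ 2^[n]`: the largest `d ≤ n` such that the numbers
`β_0, …, β_d` computed from `α_k = #{A ∈ P : |A| = k}` are all non-negative. -/
noncomputable def qdepth (n : ℕ) (P : Finset (Finset (Fin n))) : ℕ :=
  sSup {d | d ≤ n ∧ ∀ k ≤ d,
    0 ≤ qbeta (fun k => ((P.filter (fun A => A.card = k)).card : ℤ)) d k}


lemma qbeta_two (α : ℕ → ℤ) (d : ℕ) (hα0 : α 0 = 0) :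
    qbeta α d 2 = α 2 - α 1 * ((d - 1).choose 1 : ℤ) := by
  have h0 : qbeta α d 0 = α 0 := by rw [qbeta_eq]; simp
  have h1 : qbeta α d 1 = α 1 := by
    rw [qbeta_eq, Finset.sum_range_one, h0, hα0]
    simp
  rw [qbeta_eq]
  rw [show Finset.range 2 = {0, 1} by rfl]
  rw [Finset.sum_insert (by simp), Finset.sum_singleton, h0, h1, hα0]
  simp

/-- For the poset of the maximal ideal `(x_1,…,x_n)` and `d = ⌈n/2⌉ + 1`, one has
`β_2 = C(n,2) - n(d-1) < 0`; consequently `qdepth(m) = ⌈n/2⌉`. -/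
theorem stmt7 (n : ℕ) (hn : 1 ≤ n) :
    (n.choose 2 : ℤ) - (n : ℤ) * (((n + 1) / 2 : ℕ) : ℤ) < 0 ∧
    qdepth n ((Finset.univ.powerset).filter (fun A : Finset (Fin n) => A ≠ ∅)) = (n + 1) / 2 := by
  refine ⟨key_ineq n hn, ?_⟩
  set α : ℕ → ℤ := fun k =>
    ((((Finset.univ.powerset).filter (fun A : Finset (Fin n) => A ≠ ∅)).filter
      (fun A => A.card = k)).card : ℤ) with hαdef
  have hα0 : α 0 = 0 := by
    rw [hαdef]
    simpa using card_filter_eq n 0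
  have hα : ∀ k, 1 ≤ k → α k = (n.choose k : ℤ) := by
    intro k hk
    rw [hαdef]
    have := card_filter_eq n k
    rwa [if_neg (by omega)] at this
  have hα1 : α 1 = (n : ℤ) := by rw [hα 1 le_rfl, Nat.choose_one_right]
  set d0 := (n + 1) / 2 with hd0
  have hd0n : d0 ≤ n := by omega
  have hd01 : 1 ≤ d0 := by omega
  have hmem : d0 ∈ {d | d ≤ n ∧ ∀ k ≤ d, 0 ≤ qbeta α d k} := by
    refine ⟨hd0n, fun k hk => ?_⟩
    rw [closed_form n d0 hd0n α hα0 hα k hk]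
    exact gam_nonneg n hn k hk
  have hub : ∀ d ∈ {d | d ≤ n ∧ ∀ k ≤ d, 0 ≤ qbeta α d k}, d ≤ d0 := by
    rintro d ⟨hdn, hβ⟩
    by_contra hcon
    push_neg at hcon
    have h2 : 0 ≤ qbeta α d 2 := hβ 2 (by omega)
    rw [qbeta_two α d hα0, hα 2 (by omega), hα1, Nat.choose_one_right] at h2
    have hd1 : (d0 : ℤ) ≤ ((d - 1 : ℕ) : ℤ) := by exact_mod_cast (by omega : d0 ≤ d - 1)
    have hkey := key_ineq n hn
    have hnn : (0:ℤ) ≤ (n:ℤ) := by positivity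
    nlinarith [mul_le_mul_of_nonneg_left hd1 hnn]
  show sSup {d | d ≤ n ∧ ∀ k ≤ d, 0 ≤ qbeta α d k} = d0
  exact le_antisymm (csSup_le ⟨d0, hmem⟩ hub)
    (le_csSup ⟨n, fun d hd => hd.1⟩ hmem)
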